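/- Let μ₁ ≤ μ₂ ≤ ... ≤ μ_p and Y₁,...,Y_p random variables with E[Yᵢ] = μᵢ, Var(Yᵢ) ≤ σ². Let μ̃ = μ_m where m = argmin{Y₁,...,Y_p}. Then E[μ̃] - μ₁ ≤ 4√p·σ. -/

import Mathlib

open MeasureTheory ProbabilityTheory

theorem stmt_7 {Ω : Type*} [MeasurableSpace Ω] (μ : Measure Ω) [IsProbabilityMeasure μ]
    (p : ℕ) (hp : 0 < p) (μs : Fin p → ℝ) (Y : Fin p → Ω → ℝ) (σ : ℝ) (hσ : 0 ≤ σ)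
    (hmono : Monotone μs)
    (hmeas : ∀ i, Measurable (Y i))
    (hL2 : ∀ i, MemLp (Y i) 2 μ)
    (hmean : ∀ i, ∫ ω, Y i ω ∂μ = μs i)
    (hvar : ∀ i, variance (Y i) μ ≤ σ ^ 2)
    (m : Ω → Fin p) (hmmeas : Measurable m)
    (hargmin : ∀ ω i, Y (m ω) ω ≤ Y i ω) :
    (∫ ω, μs (m ω) ∂μ) - μs ⟨0, hp⟩ ≤ 4 * Real.sqrt p * σ := by
  classical
  set z : Fin p := ⟨0, hp⟩ with hz
  set q : Fin p → ℝ := fun i => (μ (m ⁻¹' {i})).toReal with hqdef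
  have hqnn : ∀ i, 0 ≤ q i := fun i => ENNReal.toReal_nonneg
  have hms : ∀ i : Fin p, MeasurableSet (m ⁻¹' {i}) :=
    fun i => hmmeas (measurableSet_singleton i)
  have hqsum : ∑ i, q i = 1 := by
    have h1 : ∑ i : Fin p, μ (m ⁻¹' {i}) = μ (m ⁻¹' (Finset.univ : Finset (Fin p))) :=
      sum_measure_preimage_singleton _ (fun i _ => hms i)
    have h2 : (m ⁻¹' (Finset.univ : Finset (Fin p))) = Set.univ := by
      ext ω; simp
    have h3 : ∑ i : Fin p, μ (m ⁻¹' {i}) = 1 := by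
      rw [h1, h2, measure_univ]
    have := congrArg ENNReal.toReal h3
    rwa [ENNReal.toReal_sum (fun i _ => measure_ne_top μ _)] at this
  -- integral as a sum
  have hint : (∫ ω, μs (m ω) ∂μ) = ∑ i, μs i * q i := by
    have heq : (fun ω => μs (m ω)) =
        fun ω => ∑ i, Set.indicator (m ⁻¹' {i}) (fun _ => μs i) ω := by
      funext ω
      rw [Finset.sum_eq_single (m ω)]
      · simp [Set.indicator_of_mem, Set.mem_preimage]
      · intro b _ hb
        apply Set.indicator_of_notMem
        simp [Ne.symm hb]
      · simp
    rw [heq, integral_finset_sum]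
    · congr 1; funext i
      rw [integral_indicator_const _ (hms i)]
      simp [hqdef, mul_comm, Measure.real]
    · intro i _
      exact (integrable_const (μs i)).indicator (hms i)
  set d : Fin p → ℝ := fun i => μs i - μs z with hddef
  have hdnn : ∀ i, 0 ≤ d i := by
    intro i
    have : μs z ≤ μs i := hmono (by simp [hz, Fin.le_def])
    simpa [hddef] using this
  have hlhs : (∫ ω, μs (m ω) ∂μ) - μs z = ∑ i, d i * q i := by
    rw [hint]
    have : ∑ i, d i * q i = ∑ i, μs i * q i - μs z * ∑ i, q i := by
      rw [Finset.mul_sum, ← Finset.sum_sub_distrib]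
      congr 1; funext i; ring
    rw [this, hqsum, mul_one]
  -- key bound
  have hkey : ∀ i, d i ^ 2 * q i ≤ 8 * σ ^ 2 := by
    intro i
    rcases eq_or_lt_of_le (hdnn i) with h0 | hdi
    · rw [← h0]
      have := hqnn i
      nlinarith [sq_nonneg σ]
    · set c : ℝ := d i / 2 with hc
      have hcpos : 0 < c := by positivity
      -- inclusion
      have hsub : m ⁻¹' {i} ⊆
          {ω | c ≤ |Y z ω - μs z|} ∪ {ω | c ≤ |Y i ω - μs i|} := by
        intro ω hω
        have hmi : m ω = i := hω
        have hle : Y i ω ≤ Y z ω := by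
          have := hargmin ω z
          rwa [hmi] at this
        by_contra hcon
        simp only [Set.mem_union, Set.mem_setOf_eq, not_or, not_le] at hcon
        obtain ⟨h1, h2⟩ := hcon
        have : d i < 2 * c := by
          have : (Y z ω - μs z) - (Y i ω - μs i) < 2 * c := by
            have := (abs_lt.mp h1).2
            have := (abs_lt.mp h2).1
            linarith
          have hge : d i ≤ (Y z ω - μs z) - (Y i ω - μs i) := by
            simp only [hddef]
            linarith
          linarith
        rw [hc] at this
        linarith
      -- Chebyshev on both events
      have hcheb : ∀ j : Fin p, μ {ω | c ≤ |Y j ω - μs j|} ≤ ENNReal.ofReal (σ ^ 2 / c ^ 2) := by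
        intro j
        have h1 : μ {ω | c ≤ |Y j ω - μ[Y j]|} ≤ ENNReal.ofReal (variance (Y j) μ / c ^ 2) :=
          meas_ge_le_variance_div_sq (hL2 j) hcpos
        have h2 : μ[Y j] = μs j := hmean j
        rw [h2] at h1
        refine h1.trans (ENNReal.ofReal_le_ofReal ?_)
        exact div_le_div_of_nonneg_right (hvar j) (by positivity) |>.trans_eq rfl
      have hmeasle : μ (m ⁻¹' {i}) ≤
          ENNReal.ofReal (σ ^ 2 / c ^ 2) + ENNReal.ofReal (σ ^ 2 / c ^ 2) :=
        ((measure_mono hsub).trans (measure_union_le _ _)).trans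
          (add_le_add (hcheb z) (hcheb i))
      have hq : q i ≤ 2 * (σ ^ 2 / c ^ 2) := by
        have := ENNReal.toReal_mono (by simp) hmeasle
        rw [ENNReal.toReal_add (by simp) (by simp),
          ENNReal.toReal_ofReal (by positivity)] at this
        simpa [hqdef, two_mul] using this
      calc d i ^ 2 * q i ≤ d i ^ 2 * (2 * (σ ^ 2 / c ^ 2)) := by
            exact mul_le_mul_of_nonneg_left hq (by positivity)
        _ = 8 * σ ^ 2 := by
            rw [hc]; field_simp; ring
  -- Cauchy-Schwarz
  have hCS : (∑ i, d i * q i) ^ 2 ≤ ∑ i, d i ^ 2 * q i := by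
    have := Finset.sum_mul_sq_le_sq_mul_sq Finset.univ
      (fun i => d i * Real.sqrt (q i)) (fun i => Real.sqrt (q i))
    have hfg : ∀ i : Fin p, (d i * Real.sqrt (q i)) * Real.sqrt (q i) = d i * q i := by
      intro i
      rw [mul_assoc, Real.mul_self_sqrt (hqnn i)]
    have hf2 : ∀ i : Fin p, (d i * Real.sqrt (q i)) ^ 2 = d i ^ 2 * q i := by
      intro i
      rw [mul_pow, Real.sq_sqrt (hqnn i)]
    have hg2 : ∀ i : Fin p, (Real.sqrt (q i)) ^ 2 = q i := fun i => Real.sq_sqrt (hqnn i)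
    simp only [hfg, hf2, hg2] at this
    rwa [hqsum, mul_one] at this
  have hsum8 : ∑ i, d i ^ 2 * q i ≤ 8 * σ ^ 2 * p := by
    calc ∑ i, d i ^ 2 * q i ≤ ∑ _i : Fin p, 8 * σ ^ 2 :=
          Finset.sum_le_sum (fun i _ => hkey i)
      _ = 8 * σ ^ 2 * p := by simp [mul_comm]
  rw [hlhs]
  have hR : 0 ≤ 4 * Real.sqrt p * σ := by positivity
  have hL : 0 ≤ ∑ i, d i * q i :=
    Finset.sum_nonneg (fun i _ => mul_nonneg (hdnn i) (hqnn i))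
  have hsq : (∑ i, d i * q i) ^ 2 ≤ (4 * Real.sqrt p * σ) ^ 2 := by
    have h16 : (4 * Real.sqrt p * σ) ^ 2 = 16 * σ ^ 2 * p := by
      rw [mul_pow, mul_pow, Real.sq_sqrt (Nat.cast_nonneg p)]
      ring
    rw [h16]
    refine (hCS.trans hsum8).trans ?_
    nlinarith [sq_nonneg σ, Nat.cast_nonneg (α := ℝ) p]
  exact (pow_le_pow_iff_left₀ hL hR (by norm_num)).mp hsq
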